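/- Let F: ℝ → ℂ be continuous with F(x) = 0 for x ≤ 1/B and F bounded on [1/B, 1] (B ≥ 2 an integer, or more generally B > 1 real). Define F*(s) = ∫_{1/B}^{1} x^{s−1} F(x) dx. Then F* is an entire function of s, and for every complex s, F*(s) = Σ_{n=0}^{∞} binomial(s−1, n) Δ^n F*(1), where Δ is the forward difference operator in the integer argument, i.e. Δ^n F*(1) = Σ_{j=0}^{n} (−1)^{n−j} binomial(n, j) F*(1+j) = ∫_{1/B}^1 F(x)(x−1)^n dx. The series converges absolutely, at rate at least geometric with ratio 1 − 1/B. -/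

import Mathlib

open intervalIntegral

/-- Generalized binomial coefficient `C(s−1, n) = (s−1)(s−2)⋯(s−n)/n!`. -/
noncomputable def gbinom (s : ℂ) (n : ℕ) : ℂ :=
  (∏ i ∈ Finset.range n, (s - 1 - i)) / (n.factorial : ℂ)

open Complex Finset

lemma iter_cpow (w : ℂ) : ∀ n : ℕ, ∀ z ∈ Complex.slitPlane,
    iteratedDeriv n (fun z : ℂ => z ^ w) z
      = (∏ i ∈ Finset.range n, (w - i)) * z ^ (w - n) := by
  intro n
  induction n with
  | zero => intro z hz; simp [iteratedDeriv_zero]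
  | succ n ih =>
    intro z hz
    rw [iteratedDeriv_succ]
    have hev : iteratedDeriv n (fun z : ℂ => z ^ w)
        =ᶠ[nhds z] fun z => (∏ i ∈ Finset.range n, (w - i)) * z ^ (w - n) := by
      filter_upwards [Complex.isOpen_slitPlane.mem_nhds hz] with y hy using ih y hy
    rw [hev.deriv_eq]
    have hd : HasDerivAt (fun z : ℂ => (∏ i ∈ Finset.range n, (w - i)) * z ^ (w - n))
        ((∏ i ∈ Finset.range n, (w - i)) * ((w - n) * z ^ (w - n - 1) * 1)) z :=
      (((hasDerivAt_id z).cpow_const hz)).const_mul _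
    rw [hd.deriv, Finset.prod_range_succ]
    push_cast
    rw [show w - ((n:ℂ) + 1) = w - n - 1 by ring]
    ring

lemma binom_hasSum (w y : ℂ) (hy : ‖y‖ < 1) :
    HasSum (fun n : ℕ => (∏ i ∈ Finset.range n, (w - i)) / (n.factorial : ℂ) * y ^ n)
      ((1 + y) ^ w) := by
  set r' : ℝ := (1 + ‖y‖) / 2 with hr'
  have h0 : 0 ≤ ‖y‖ := norm_nonneg y
  have hyr : ‖y‖ < r' := by rw [hr']; linarith
  have hr1 : r' < 1 := by rw [hr']; linarith
  have hr0 : 0 < r' := by rw [hr']; linarith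
  set R : NNReal := ⟨r', hr0.le⟩ with hR
  have hsub : Metric.closedBall (1 : ℂ) r' ⊆ Complex.slitPlane := by
    intro z hz
    rw [Metric.mem_closedBall, dist_eq_norm] at hz
    left
    have : |(z - 1).re| ≤ ‖z - 1‖ := Complex.abs_re_le_norm _
    have hzre : (z - 1).re = z.re - 1 := by simp
    have : |z.re - 1| ≤ r' := by rw [← hzre]; exact this.trans hz
    have := abs_le.mp this
    linarith [this.1]
  have hdiff : DifferentiableOn ℂ (fun z : ℂ => z ^ w) (Metric.closedBall (1 : ℂ) R) := by
    intro z hz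
    have hz' : z ∈ Complex.slitPlane := hsub hz
    exact (((hasDerivAt_id z).cpow_const hz').differentiableAt).differentiableWithinAt
  have hball := hdiff.hasFPowerSeriesOnBall (by exact_mod_cast hr0)
  have hyball : y ∈ Metric.eball (0 : ℂ) R := by
    rw [Metric.emetric_ball_nnreal, Metric.mem_ball, dist_zero_right]
    exact hyr
  have H := hball.hasSum_iteratedFDeriv hyball
  have hterm : ∀ n : ℕ, ((n.factorial : ℂ))⁻¹ • iteratedFDeriv ℂ n (fun z : ℂ => z ^ w) 1
      (fun _ => y) = (∏ i ∈ Finset.range n, (w - i)) / (n.factorial : ℂ) * y ^ n := by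
    intro n
    have h1 : (fun _ : Fin n => y) = fun i : Fin n => y • (1 : ℂ) := by simp
    rw [h1, (iteratedFDeriv ℂ n (fun z : ℂ => z ^ w) 1).map_smul_univ (fun _ => y) fun _ => 1]
    rw [← iteratedDeriv_eq_iteratedFDeriv,
      iter_cpow w n 1 (by simp [Complex.slitPlane]), Complex.one_cpow]
    simp only [Finset.prod_const, Finset.card_univ, Fintype.card_fin, smul_eq_mul]
    field_simp
  rw [funext hterm] at H
  exact H

noncomputable def gb (R : ℝ) (n : ℕ) : ℝ := (∏ i ∈ Finset.range n, (R + i)) / (n.factorial : ℝ)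

lemma gb_pos {R : ℝ} (hR : 0 < R) (n : ℕ) : 0 < gb R n := by
  apply div_pos
  · exact Finset.prod_pos fun i _ => by positivity
  · exact_mod_cast Nat.factorial_pos n

lemma gbinom_le {s : ℂ} {R : ℝ} (hsR : ‖s - 1‖ ≤ R) (n : ℕ) : ‖gbinom s n‖ ≤ gb R n := by
  rw [gbinom, gb, norm_div, norm_prod, Complex.norm_natCast]
  rw [div_le_div_iff_of_pos_right (by exact_mod_cast Nat.factorial_pos n)]
  refine Finset.prod_le_prod (fun i _ => norm_nonneg _) fun i hi => ?_
  calc ‖s - 1 - (i : ℂ)‖ ≤ ‖s - 1‖ + ‖(i : ℂ)‖ := norm_sub_le _ _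
    _ ≤ R + i := by rw [Complex.norm_natCast]; linarith

lemma gb_summable {R ρ : ℝ} (hR : 0 < R) (h0 : 0 < ρ) (h1 : ρ < 1) :
    Summable fun n => gb R n * ρ ^ n := by
  apply summable_of_ratio_test_tendsto_lt_one h1
  · filter_upwards with n
    exact (mul_pos (gb_pos hR n) (pow_pos h0 n)).ne'
  · have heq : ∀ n : ℕ, ‖gb R (n + 1) * ρ ^ (n + 1)‖ / ‖gb R n * ρ ^ n‖
        = (1 + (R - 1) / (n + 1)) * ρ := by
      intro n
      rw [Real.norm_of_nonneg (mul_pos (gb_pos hR _) (pow_pos h0 _)).le,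
        Real.norm_of_nonneg (mul_pos (gb_pos hR _) (pow_pos h0 _)).le,
        gb, gb, Finset.prod_range_succ, Nat.factorial_succ, pow_succ]
      have hP : (0:ℝ) < ∏ i ∈ Finset.range n, (R + i) :=
        Finset.prod_pos fun i _ => by positivity
      have hfac : (0:ℝ) < (n.factorial : ℝ) := by exact_mod_cast Nat.factorial_pos n
      have hn1 : (0:ℝ) < (n:ℝ) + 1 := by positivity
      push_cast
      field_simp
      ring
    rw [funext heq]
    have h2 : Filter.Tendsto (fun n : ℕ => (R - 1) / ((n : ℝ) + 1)) Filter.atTop (nhds 0) := by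
      apply Filter.Tendsto.div_atTop tendsto_const_nhds
      exact Filter.tendsto_atTop_add_const_right _ 1 tendsto_natCast_atTop_atTop
    have h3 : Filter.Tendsto (fun n : ℕ => (1 + (R - 1) / ((n : ℝ) + 1)) * ρ)
        Filter.atTop (nhds ((1 + 0) * ρ)) :=
      (((tendsto_const_nhds : Filter.Tendsto (fun _ : ℕ => (1:ℝ)) Filter.atTop (nhds 1)).add
        h2).mul (tendsto_const_nhds : Filter.Tendsto (fun _ : ℕ => ρ) Filter.atTop (nhds ρ)))
    simpa using h3

/-- for continuous `F` vanishing on `(−∞, 1/B]`, the Mellin-type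
transform `F*(s) = ∫_{1/B}^1 x^{s−1}F(x)dx` is entire; its forward differences at
`1` are `Δⁿ F*(1) = ∫_{1/B}^1 F(x)(x−1)ⁿ dx`, the Newton series
`Σ_n C(s−1,n) Δⁿ F*(1)` converges absolutely to `F*(s)` for every `s`, at a rate
at least geometric with ratio `1 − 1/B`. -/
theorem newton_series_mellin
    (B : ℝ) (hB : 1 < B)
    (F : ℝ → ℂ) (hFc : Continuous F) (hF0 : ∀ x ≤ 1 / B, F x = 0)
    (hFbd : ∃ Cb : ℝ, ∀ x ∈ Set.Icc (1 / B) 1, ‖F x‖ ≤ Cb)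
    (Fstar : ℂ → ℂ)
    (hFstar : ∀ s, Fstar s = ∫ x in (1/B : ℝ)..1, (x : ℂ) ^ (s - 1) * F x)
    (Δ : ℕ → ℂ)
    (hΔ : ∀ n, Δ n = ∑ j ∈ Finset.range (n + 1),
      (-1 : ℂ) ^ (n - j) * (n.choose j : ℂ) * Fstar (1 + j)) :
    Differentiable ℂ Fstar ∧
    (∀ n : ℕ, Δ n = ∫ x in (1/B : ℝ)..1, F x * ((x : ℂ) - 1) ^ n) ∧
    (∀ s : ℂ, HasSum (fun n : ℕ => gbinom s n * Δ n) (Fstar s)) ∧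
    (∀ s : ℂ, Summable fun n : ℕ => ‖gbinom s n * Δ n‖) ∧
    (∀ s : ℂ, ∀ r : ℝ, 1 - 1 / B < r →
      ∃ c : ℝ, ∀ n : ℕ, ‖gbinom s n * Δ n‖ ≤ c * r ^ n) := by
  have hB0 : (0:ℝ) < B := by linarith
  have ha0 : (0:ℝ) < 1 / B := by positivity
  have ha1 : 1 / B < 1 := by rw [div_lt_one hB0]; exact hB
  obtain ⟨Cb, hCb⟩ := hFbd
  set C : ℝ := max Cb 0 with hCdef
  have hC0 : 0 ≤ C := le_max_right _ _
  have hCF : ∀ x ∈ Set.Icc (1/B) 1, ‖F x‖ ≤ C := fun x hx => (hCb x hx).trans (le_max_left _ _)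
  -- norm bound for (x:ℂ) - 1
  have hxnorm : ∀ x ∈ Set.Ioc (1/B) 1, ‖(x:ℂ) - 1‖ ≤ 1 - 1/B := by
    intro x hx
    rw [show (x:ℂ) - 1 = ((x - 1 : ℝ) : ℂ) by push_cast; ring]
    rw [Complex.norm_real, Real.norm_eq_abs, abs_of_nonpos (by linarith [hx.2])]
    linarith [hx.1]
  -- conjunct 2
  have hΔ2 : ∀ n : ℕ, Δ n = ∫ x in (1/B : ℝ)..1, F x * ((x : ℂ) - 1) ^ n := by
    intro n
    have hFs : ∀ j : ℕ, Fstar (1 + j) = ∫ x in (1/B:ℝ)..1, ((x:ℂ)) ^ (j:ℕ) * F x := by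
      intro j
      rw [hFstar]
      have hc : ∀ x : ℝ, (x:ℂ) ^ ((1 + (j:ℂ)) - 1) = (x:ℂ) ^ (j:ℕ) := by
        intro x
        rw [show (1 + (j:ℂ)) - 1 = ((j:ℕ):ℂ) by push_cast; ring, Complex.cpow_natCast]
      simp only [hc]
    rw [hΔ]
    simp only [hFs, ← intervalIntegral.integral_const_mul]
    rw [← intervalIntegral.integral_finset_sum (f := fun (j : ℕ) (x : ℝ) =>
        (-1 : ℂ) ^ (n - j) * (n.choose j : ℂ) * ((x:ℂ) ^ j * F x)) (fun j _ =>
      (continuous_const.mul ((Complex.continuous_ofReal.pow j).mul hFc) : Continuous fun x : ℝ =>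
        (-1 : ℂ) ^ (n - j) * (n.choose j : ℂ) * ((x:ℂ) ^ j * F x)).intervalIntegrable _ _)]
    apply intervalIntegral.integral_congr
    intro x _
    simp only
    rw [show ((x:ℂ) - 1) = ((x:ℂ) + (-1)) by ring, add_pow, Finset.mul_sum]
    exact Finset.sum_congr rfl fun j hj => by ring
  -- bound on Δ
  have hΔbd : ∀ n : ℕ, ‖Δ n‖ ≤ (1 - 1/B) ^ n * C := by
    intro n
    rw [hΔ2 n]
    calc ‖∫ x in (1/B:ℝ)..1, F x * ((x:ℂ) - 1) ^ n‖
        ≤ (C * (1 - 1/B) ^ n) * |1 - 1/B| := by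
          apply intervalIntegral.norm_integral_le_of_norm_le_const
          intro x hx
          rw [Set.uIoc_of_le ha1.le] at hx
          rw [norm_mul, norm_pow]
          have h1 : ‖F x‖ ≤ C := hCF x ⟨hx.1.le, hx.2⟩
          have h2 : ‖(x:ℂ) - 1‖ ≤ 1 - 1/B := hxnorm x hx
          have h3 : (0:ℝ) ≤ 1 - 1/B := by linarith
          exact mul_le_mul h1 (pow_le_pow_left₀ (norm_nonneg _) h2 n) (by positivity) hC0
      _ ≤ (1 - 1/B) ^ n * C := by
          rw [_root_.abs_of_nonneg (show (0:ℝ) ≤ 1 - 1/B by linarith)]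
          nlinarith [mul_nonneg (mul_nonneg hC0
            (pow_nonneg (show (0:ℝ) ≤ 1 - 1/B by linarith) n)) ha0.le]
  -- conjunct 3
  have key : ∀ s : ℂ, HasSum (fun n : ℕ => gbinom s n * Δ n) (Fstar s) := by
    intro s
    rw [hFstar]
    have H := intervalIntegral.hasSum_integral_of_dominated_convergence
      (μ := MeasureTheory.volume) (a := (1/B : ℝ)) (b := (1:ℝ))
      (F := fun (n : ℕ) (x : ℝ) => gbinom s n * ((x:ℂ) - 1) ^ n * F x)
      (f := fun x : ℝ => (x:ℂ) ^ (s - 1) * F x)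
      (bound := fun n _ => ‖gbinom s n‖ * (1 - 1/B) ^ n * C)
      (fun n => ((continuous_const.mul
        ((Complex.continuous_ofReal.sub continuous_const).pow n)).mul hFc).aestronglyMeasurable)
      (fun n => by
        filter_upwards with t ht
        rw [Set.uIoc_of_le ha1.le] at ht
        rw [norm_mul, norm_mul, norm_pow]
        have h1 : ‖F t‖ ≤ C := hCF t ⟨ht.1.le, ht.2⟩
        have h2 : ‖(t:ℂ) - 1‖ ≤ 1 - 1/B := hxnorm t ht
        have h3 : (0:ℝ) ≤ 1 - 1/B := by linarith
        exact mul_le_mul (mul_le_mul le_rfl (pow_le_pow_left₀ (norm_nonneg _) h2 n)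
          (by positivity) (norm_nonneg _)) h1 (norm_nonneg _) (by positivity))
      (by
        filter_upwards with t ht
        have hR0 : (0:ℝ) < ‖s - 1‖ + 1 := by positivity
        refine Summable.of_nonneg_of_le (fun n => mul_nonneg (mul_nonneg (norm_nonneg _)
          (pow_nonneg (by linarith) n)) hC0) (fun n => ?_)
          ((gb_summable hR0 (by linarith : (0:ℝ) < 1 - 1/B) (by linarith)).mul_right C)
        exact mul_le_mul_of_nonneg_right (mul_le_mul_of_nonneg_right
          (gbinom_le (by linarith [norm_nonneg (s-1)]) n)
          (pow_nonneg (by linarith) n)) hC0)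
      (by apply _root_.intervalIntegrable_const)
      (by
        filter_upwards with t ht
        rw [Set.uIoc_of_le ha1.le] at ht
        have hnlt : ‖(t:ℂ) - 1‖ < 1 := lt_of_le_of_lt (hxnorm t ht) (by linarith)
        have hb := (binom_hasSum (s - 1) ((t:ℂ) - 1) hnlt).mul_right (F t)
        rw [show (1:ℂ) + ((t:ℂ) - 1) = (t:ℂ) by ring] at hb
        exact hb)
    have hInt : ∀ n : ℕ, (∫ x in (1/B:ℝ)..1, gbinom s n * ((x:ℂ) - 1) ^ n * F x)
        = gbinom s n * Δ n := by
      intro n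
      rw [hΔ2 n, ← intervalIntegral.integral_const_mul]
      apply intervalIntegral.integral_congr
      intro x _
      simp only
      ring
    rw [funext hInt] at H
    exact H
  -- master bound
  have hmain : ∀ (s : ℂ) (R : ℝ), 0 < R → ‖s - 1‖ ≤ R → ∀ n : ℕ,
      ‖gbinom s n * Δ n‖ ≤ gb R n * (1 - 1/B) ^ n * C := by
    intro s R hR0 hsR n
    rw [norm_mul]
    calc ‖gbinom s n‖ * ‖Δ n‖ ≤ gb R n * ((1 - 1/B) ^ n * C) :=
          mul_le_mul (gbinom_le hsR n) (hΔbd n) (norm_nonneg _) (gb_pos hR0 n).le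
      _ = gb R n * (1 - 1/B) ^ n * C := by ring
  refine ⟨?_, hΔ2, key, ?_, ?_⟩
  · -- differentiability
    rw [show Fstar = fun s => ∑' n : ℕ, gbinom s n * Δ n from funext fun s => (key s).tsum_eq.symm]
    intro s₀
    have hR0 : (0:ℝ) < ‖s₀ - 1‖ + 1 := by positivity
    have hd := differentiableOn_tsum_of_summable_norm
      (u := fun n => gb (‖s₀ - 1‖ + 1) n * (1 - 1/B) ^ n * C)
      (F := fun (n : ℕ) (s : ℂ) => gbinom s n * Δ n)
      (((gb_summable hR0 (by linarith) (by linarith)).mul_right C))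
      (fun n => (show Differentiable ℂ fun s : ℂ => gbinom s n * Δ n by
        unfold gbinom; fun_prop).differentiableOn)
      Metric.isOpen_ball
      (fun n w hw => by
        rw [Metric.mem_ball, dist_eq_norm] at hw
        exact hmain w _ hR0 hw.le n)
    exact (hd.differentiableAt (Metric.isOpen_ball.mem_nhds (by
      rw [Metric.mem_ball, dist_eq_norm]; linarith)))
  · -- summability
    intro s
    have hR0 : (0:ℝ) < ‖s - 1‖ + 1 := by positivity
    exact Summable.of_nonneg_of_le (fun n => norm_nonneg _)
      (fun n => hmain s _ hR0 (by linarith [norm_nonneg (s-1)]) n)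
      ((gb_summable hR0 (by linarith) (by linarith)).mul_right C)
  · -- geometric bound
    intro s r hr
    have hr0 : (0:ℝ) < r := lt_of_le_of_lt (by linarith) hr
    set ρ : ℝ := (1 - 1/B) / r with hρdef
    have hρ0 : 0 < ρ := by apply div_pos <;> linarith
    have hρ1 : ρ < 1 := (div_lt_one hr0).mpr hr
    have hR0 : (0:ℝ) < ‖s - 1‖ + 1 := by positivity
    have hsum := gb_summable (R := ‖s - 1‖ + 1) hR0 hρ0 hρ1
    refine ⟨C * (∑' m, gb (‖s - 1‖ + 1) m * ρ ^ m), fun n => ?_⟩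
    have hb1 : gb (‖s - 1‖ + 1) n * ρ ^ n ≤ ∑' m, gb (‖s - 1‖ + 1) m * ρ ^ m :=
      Summable.le_tsum hsum n fun m _ => mul_nonneg (gb_pos hR0 m).le (pow_nonneg hρ0.le m)
    calc ‖gbinom s n * Δ n‖ ≤ gb (‖s - 1‖ + 1) n * (1 - 1/B) ^ n * C :=
          hmain s _ hR0 (by linarith [norm_nonneg (s-1)]) n
      _ = C * (gb (‖s - 1‖ + 1) n * ρ ^ n) * r ^ n := by
          rw [show (1 - 1/B) = ρ * r from (div_mul_cancel₀ _ hr0.ne').symm, mul_pow]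
          ring
      _ ≤ C * (∑' m, gb (‖s - 1‖ + 1) m * ρ ^ m) * r ^ n :=
          mul_le_mul_of_nonneg_right (mul_le_mul_of_nonneg_left hb1 hC0) (pow_nonneg hr0.le n)
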